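/- Let u = (u_1,…,u_n) be a profile of monotone utility functions over the item set M = {1,…,m}, and let k, d be non-negative integers. If an allocation A is EFd with respect to the profile u^{−k} = (u_1^{−k},…,u_n^{−k}), then A is EF(d+k) with respect to u. -/
import Mathlib


def IsPartition {n m : ℕ} (A : Fin n → Finset (Fin m)) : Prop :=
  (∀ i j : Fin n, i ≠ j → Disjoint (A i) (A j)) ∧
    Finset.univ.biUnion A = (Finset.univ : Finset (Fin m))

def EF {n m : ℕ} (c : ℕ) (u : Fin n → Finset (Fin m) → ℝ)
    (A : Fin n → Finset (Fin m)) : Prop :=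
  ∀ i i' : Fin n, ∃ S ⊆ A i', S.card ≤ c ∧ u i (A i) ≥ u i (A i' \ S)

/-- `u^{-k}(S) = min over T ⊆ M, |T| ≤ k of u(S \ T)`. -/
noncomputable def kRemoved {m : ℕ} (u : Finset (Fin m) → ℝ) (k : ℕ)
    (S : Finset (Fin m)) : ℝ :=
  ((Finset.univ : Finset (Fin m)).powerset.filter fun T => T.card ≤ k).inf'
    ⟨∅, by simp⟩ fun T => u (S \ T)

theorem EF_kRemoved_to_EF (n m : ℕ) (u : Fin n → Finset (Fin m) → ℝ)
    (hu : ∀ i : Fin n, (∀ S : Finset (Fin m), 0 ≤ u i S) ∧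
      ∀ S T : Finset (Fin m), S ⊆ T → u i S ≤ u i T)
    (k d : ℕ) (A : Fin n → Finset (Fin m)) (hA : IsPartition A)
    (h : EF d (fun i => kRemoved (u i) k) A) :
    EF (d + k) u A := by
  intro i i'
  obtain ⟨S, hS, hScard, hge⟩ := h i i'
  -- find minimizer T₀ for kRemoved (u i) k (A i' \ S)
  obtain ⟨T₀, hT₀mem, hT₀eq⟩ :=
    Finset.exists_mem_eq_inf'
      (s := (Finset.univ : Finset (Fin m)).powerset.filter fun T => T.card ≤ k)
      ⟨∅, by simp⟩ (fun T => u i ((A i' \ S) \ T))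
  simp only [Finset.mem_filter, Finset.mem_powerset] at hT₀mem
  refine ⟨(S ∪ T₀) ∩ A i', Finset.inter_subset_right, ?_, ?_⟩
  · calc ((S ∪ T₀) ∩ A i').card ≤ (S ∪ T₀).card := Finset.card_le_card Finset.inter_subset_left
      _ ≤ S.card + T₀.card := Finset.card_union_le _ _
      _ ≤ d + k := Nat.add_le_add hScard hT₀mem.2
  · have h1 : kRemoved (u i) k (A i) ≤ u i (A i) := by
      have h1' := Finset.inf'_le (s := (Finset.univ : Finset (Fin m)).powerset.filter
          fun T => T.card ≤ k) (fun T => u i (A i \ T)) (b := (∅ : Finset (Fin m))) (by simp)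
      simpa [kRemoved] using h1'
    have h2 : kRemoved (u i) k (A i' \ S) = u i ((A i' \ S) \ T₀) := hT₀eq
    have h3 : A i' \ ((S ∪ T₀) ∩ A i') = (A i' \ S) \ T₀ := by
      ext x
      simp only [Finset.mem_sdiff, Finset.mem_inter, Finset.mem_union]
      tauto
    rw [h3, ← h2]
    exact le_trans hge h1
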